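/- Let S be a boolean n×n matrix, V a surjective boolean n×N collector, and Π = S* the reflexive-transitive closure of S. If VVᵀΠV = ΠV, then ΠVVᵀ = ΠVVᵀΠ. -/

import Mathlib

open Matrix

instance : CommSemiring Prop where
  add a b := a ∨ b
  add_assoc a b c := propext or_assoc
  zero := False
  zero_add a := false_or a
  add_zero a := or_false a
  add_comm a b := propext or_comm
  nsmul n p := n ≠ 0 ∧ p
  nsmul_zero p := by show ((0:ℕ) ≠ 0 ∧ p) = False; simp
  nsmul_succ n p := by
    show ((n + 1 : ℕ) ≠ 0 ∧ p) = ((n ≠ 0 ∧ p) ∨ p)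
    by_cases h : n = 0 <;> simp [h]
  mul a b := a ∧ b
  mul_assoc a b c := propext and_assoc
  one := True
  one_mul a := true_and a
  mul_one a := and_true a
  left_distrib a b c := propext and_or_left
  right_distrib a b c := propext or_and_right
  zero_mul a := false_and a
  mul_zero a := and_false a
  mul_comm a b := propext and_comm

instance {α : Type*} : CommSemiring (Set α) where
  add a b := a ∪ b
  add_assoc := Set.union_assoc
  zero := (∅ : Set α)
  zero_add := Set.empty_union
  add_zero := Set.union_empty
  add_comm := Set.union_comm
  nsmul n s := {x ∈ s | n ≠ 0}
  nsmul_zero s := by show {x ∈ s | (0:ℕ) ≠ 0} = (∅ : Set α); simp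
  nsmul_succ n s := by
    show {x ∈ s | (n + 1 : ℕ) ≠ 0} = {x ∈ s | n ≠ 0} ∪ s
    by_cases h : n = 0 <;> ext x <;> simp [h]
  mul a b := a ∩ b
  mul_assoc := Set.inter_assoc
  one := (Set.univ : Set α)
  one_mul := Set.univ_inter
  mul_one := Set.inter_univ
  left_distrib := Set.inter_union_distrib_left
  right_distrib := Set.union_inter_distrib_right
  zero_mul := Set.empty_inter
  mul_zero := Set.inter_empty
  mul_comm := Set.inter_comm

/-- Reflexive-transitive closure `S* = Σ_{k ≥ 0} S^k` of a boolean matrix. -/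
def mstar {n : ℕ} (S : Matrix (Fin n) (Fin n) Prop) : Matrix (Fin n) (Fin n) Prop :=
  Matrix.of fun i j => ∃ k : ℕ, (S ^ k) i j

lemma prop_sum_eq {α : Type*} (s : Finset α) (f : α → Prop) :
    s.sum f = ∃ a ∈ s, f a := by
  classical
  induction s using Finset.induction_on with
  | empty =>
    show False = _
    simp
  | insert _ _ hnot ih =>
    rw [Finset.sum_insert hnot]
    show (_ ∨ _) = _
    rw [ih]
    apply propext
    simp

lemma prop_mul_apply {a b c : ℕ} (A : Matrix (Fin a) (Fin b) Prop)
    (B : Matrix (Fin b) (Fin c) Prop) (i : Fin a) (j : Fin c) :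
    (A * B) i j = ∃ k, A i k ∧ B k j := by
  rw [Matrix.mul_apply, prop_sum_eq]
  apply propext
  constructor
  · rintro ⟨k, -, hk⟩; exact ⟨k, hk⟩
  · rintro ⟨k, hk⟩; exact ⟨k, Finset.mem_univ k, hk⟩

lemma mstar_refl {n : ℕ} (S : Matrix (Fin n) (Fin n) Prop) (i : Fin n) :
    mstar S i i := by
  refine ⟨0, ?_⟩
  rw [pow_zero, Matrix.one_apply_eq]
  exact trivial

lemma mstar_trans {n : ℕ} (S : Matrix (Fin n) (Fin n) Prop) {i a b : Fin n}
    (h1 : mstar S i a) (h2 : mstar S a b) : mstar S i b := by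
  obtain ⟨k, hk⟩ := h1
  obtain ⟨m, hm⟩ := h2
  refine ⟨k + m, ?_⟩
  rw [pow_add, prop_mul_apply]
  exact ⟨a, hk, hm⟩

/-- if `VVᵀΠV = ΠV` for `Π = S*`, then `ΠVVᵀ = ΠVVᵀΠ`. -/
theorem pi_V_Vt_absorbs_pi {n N : ℕ}
    (S : Matrix (Fin n) (Fin n) Prop) (V : Matrix (Fin n) (Fin N) Prop)
    (hcol : ∀ i, ∃! j, V i j) (hsurj : ∀ j, ∃ i, V i j)
    (h : V * Vᵀ * mstar S * V = mstar S * V) :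
    mstar S * V * Vᵀ = mstar S * V * Vᵀ * mstar S := by
  ext i j
  simp only [prop_mul_apply, Matrix.transpose_apply]
  constructor
  · rintro ⟨c, hc, hVj⟩
    exact ⟨j, ⟨c, hc, hVj⟩, mstar_refl S j⟩
  · rintro ⟨b, ⟨c, ⟨a, hPia, hVac⟩, hVbc⟩, hPbj⟩
    -- class of j
    obtain ⟨cj, hVjcj, -⟩ := hcol j
    -- (V * Vᵀ * mstar S * V) a cj holds
    have key : (V * Vᵀ * mstar S * V) a cj := by
      simp only [prop_mul_apply, Matrix.transpose_apply]
      exact ⟨j, ⟨b, ⟨c, hVac, hVbc⟩, hPbj⟩, hVjcj⟩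
    rw [h, prop_mul_apply] at key
    obtain ⟨b', hPab', hVb'⟩ := key
    exact ⟨cj, ⟨b', mstar_trans S hPia hPab', hVb'⟩, hVjcj⟩
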